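/- Let ρ : ℝ → ℝ be Lebesgue integrable. Then (1/R) ∫_{−R}^{R} ∫_{−R}^{R} ρ(x−y) dx dy → 2 ∫_ℝ ρ(x) dx as R → ∞. -/
import Mathlib


open MeasureTheory Filter

/-- for Lebesgue-integrable `ρ : ℝ → ℝ`,
`(1/R) ∫_{−R}^{R} ∫_{−R}^{R} ρ(x−y) dx dy → 2 ∫_ℝ ρ(x) dx` as `R → ∞`. -/
theorem stmt18 (ρ : ℝ → ℝ) (hρ : Integrable ρ) :
    Filter.Tendsto
      (fun R : ℝ => (1 / R) * ∫ y in (-R)..R, ∫ x in (-R)..R, ρ (x - y))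
      Filter.atTop (nhds (2 * ∫ x : ℝ, ρ x)) := by
  have hii : ∀ a b : ℝ, IntervalIntegrable ρ volume a b := fun a b => hρ.intervalIntegrable
  set G : ℝ → ℝ := fun t => ∫ x in (0:ℝ)..t, ρ x with hG
  have hGc : Continuous G := intervalIntegral.continuous_primitive hii 0
  have hab : ∀ a b : ℝ, (∫ x in a..b, ρ x) = G b - G a := by
    intro a b
    have := intervalIntegral.integral_add_adjacent_intervals (hii 0 a) (hii a b)
    simp only [hG]
    linarith
  set F : ℝ → ℝ → ℝ := fun R u => ∫ x in (-R - R*u)..(R - R*u), ρ x with hFdef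
  have key : Tendsto (fun R => ∫ u in Set.Ioc (-1:ℝ) 1, F R u) atTop
      (nhds (∫ _u in Set.Ioc (-1:ℝ) 1, (∫ x : ℝ, ρ x))) := by
    apply tendsto_integral_filter_of_dominated_convergence (fun _ => ∫ x : ℝ, ‖ρ x‖)
    · refine Eventually.of_forall (fun R => ?_)
      have : Continuous (F R) := by
        have : F R = fun u => G (R - R*u) - G (-R - R*u) := by
          funext u; simp [hFdef, hab]
        rw [this]
        fun_prop
      exact this.aestronglyMeasurable.restrict
    · refine Eventually.of_forall (fun R => ?_)
      refine Eventually.of_forall (fun u => ?_)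
      have h1 : ‖F R u‖ ≤ |∫ x in (-R - R*u)..(R - R*u), ‖ρ x‖| :=
        intervalIntegral.norm_integral_le_abs_integral_norm
      refine h1.trans ?_
      rcases le_total (-R - R*u) (R - R*u) with h | h
      · rw [intervalIntegral.integral_of_le h, abs_of_nonneg
          (setIntegral_nonneg measurableSet_Ioc (fun x _ => norm_nonneg _))]
        exact setIntegral_le_integral hρ.norm (Eventually.of_forall fun x => norm_nonneg _)
      · rw [intervalIntegral.integral_symm, abs_neg, intervalIntegral.integral_of_le h,
          abs_of_nonneg (setIntegral_nonneg measurableSet_Ioc (fun x _ => norm_nonneg _))]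
        exact setIntegral_le_integral hρ.norm (Eventually.of_forall fun x => norm_nonneg _)
    · exact integrable_const _
    · have hne : ∀ᵐ u : ℝ ∂(volume.restrict (Set.Ioc (-1:ℝ) 1)), u ≠ 1 := by
        refine ae_restrict_of_ae ?_
        have : (volume : Measure ℝ) {(1:ℝ)} = 0 := measure_singleton 1
        rw [ae_iff]
        convert this using 2
        ext u; simp
      filter_upwards [hne, ae_restrict_mem measurableSet_Ioc] with u hu1 hu
      have hu1' : u < 1 := lt_of_le_of_ne hu.2 hu1
      have ha : Tendsto (fun R : ℝ => -R - R*u) atTop atBot := by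
        have : (fun R : ℝ => -R - R*u) = fun R => (-(1+u)) * R := by funext R; ring
        rw [this]
        exact tendsto_id.const_mul_atTop_of_neg (by linarith [hu.1])
      have hb : Tendsto (fun R : ℝ => R - R*u) atTop atTop := by
        have : (fun R : ℝ => R - R*u) = fun R => (1-u) * R := by funext R; ring
        rw [this]
        exact tendsto_id.const_mul_atTop (by linarith)
      exact intervalIntegral_tendsto_integral hρ ha hb
  have hval : (∫ _u in Set.Ioc (-1:ℝ) 1, (∫ x : ℝ, ρ x)) = 2 * ∫ x : ℝ, ρ x := by
    rw [setIntegral_const]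
    simp [Real.volume_Ioc]
    norm_num
  rw [hval] at key
  refine key.congr' ?_
  filter_upwards [eventually_gt_atTop (0:ℝ)] with R hR
  have hR0 : R ≠ 0 := ne_of_gt hR
  have inner : ∀ y : ℝ, (∫ x in (-R)..R, ρ (x - y)) = ∫ x in (-R - y)..(R - y), ρ x :=
    fun y => intervalIntegral.integral_comp_sub_right ρ y
  calc ∫ u in Set.Ioc (-1:ℝ) 1, F R u
      = ∫ u in (-1:ℝ)..1, F R u := (intervalIntegral.integral_of_le (by norm_num)).symm
    _ = ∫ u in (-1:ℝ)..1, (fun y => ∫ x in (-R - y)..(R - y), ρ x) (R * u) := by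
        simp only [hFdef]
    _ = R⁻¹ • ∫ y in (R * (-1))..(R * 1), ∫ x in (-R - y)..(R - y), ρ x :=
        intervalIntegral.integral_comp_mul_left (fun y => ∫ x in (-R - y)..(R - y), ρ x) hR0
    _ = (1 / R) * ∫ y in (-R)..R, ∫ x in (-R)..R, ρ (x - y) := by
        simp only [mul_neg_one, mul_one, smul_eq_mul, one_div, inner]
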